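/- arXiv:1309.1512 — 2 statements merged into one kernel-verified Lean document; each statement's English description precedes it below -/
import Mathlib

section
/- Let (X,d) and (X,d') be two metrics on a compact space inducing the same topology. Then for a compactly generated pseudogroup G acting on X, the geometric entropy with respect to d is zero (respectively finite, respectively infinite) if and only if the geometric entropy with respect to d' is zero (respectively finite, respectively infinite). -/
section Entropy

variable {X : Type*}

/-- A distance function `d : X → X → ℝ` is a metric. -/
def IsMetric {X : Type*} (d : X → X → ℝ) : Prop :=
  (∀ x y, d x y = d y x) ∧ (∀ x y, d x y = 0 ↔ x = y) ∧ (∀ x y z, d x z ≤ d x y + d y z)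

/-- A partial map of `X`: a domain together with a map (a generator of a pseudogroup). -/
structure PMap (X : Type*) where
  dom : Set X
  toFun : X → X

open Classical in
/-- Apply a word (a list of generators) to a point, when defined. -/
noncomputable def wordApply : List (PMap X) → X → Option X
  | [], x => some x
  | g :: gs, x =>
    match wordApply gs x with
    | none => none
    | some y => if y ∈ g.dom then some (g.toFun y) else none

/-- `E` is a `(d,ε,ℓ)`-separated set for the pseudogroup generated by `L`. -/
def IsSep (L : List (PMap X)) (d : X → X → ℝ) (ε : ℝ) (ℓ : ℕ) (E : Finset X) : Prop :=
  ∀ w ∈ E, ∀ w' ∈ E, w ≠ w' →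
    ∃ gs : List (PMap X), (∀ g ∈ gs, g ∈ L) ∧ gs.length ≤ ℓ ∧
      ∃ u u' : X, wordApply gs w = some u ∧ wordApply gs w' = some u' ∧ ε ≤ d u u'

/-- The maximal cardinality (in `ℕ∞`) of a `(d,ε,ℓ)`-separated set. -/
noncomputable def maxSep (L : List (PMap X)) (d : X → X → ℝ) (ε : ℝ) (ℓ : ℕ) : ℕ∞ :=
  ⨆ (E : Finset X) (_ : IsSep L d ε ℓ E), (E.card : ℕ∞)

open Classical in
/-- `log(m)/ℓ`, valued in `EReal`, with value `⊤` when `m = ⊤`. -/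
noncomputable def logRate (m : ℕ∞) (ℓ : ℕ) : EReal :=
  if m = ⊤ then ⊤ else ((Real.log ((m.untopD 0 : ℕ) : ℝ) / (ℓ : ℝ) : ℝ) : EReal)

/-- The geometric entropy of the pseudogroup generated by `L` with respect to `d`. -/
noncomputable def entropy (L : List (PMap X)) (d : X → X → ℝ) : EReal :=
  ⨆ (ε : ℝ) (_ : 0 < ε),
    Filter.limsup (fun ℓ : ℕ => logRate (maxSep L d ε ℓ) ℓ) Filter.atTop

end Entropy

section Aux

variable {X : Type*}

/-- Monotonicity of `logRate` in its first argument. -/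
lemma logRate_mono {m m' : ℕ∞} (h : m ≤ m') (ℓ : ℕ) : logRate m ℓ ≤ logRate m' ℓ := by
  unfold logRate
  by_cases h' : m' = ⊤
  · simp [h']
  · have hm : m ≠ ⊤ := fun hm => h' (top_le_iff.1 (hm ▸ h))
    rw [if_neg hm, if_neg h']
    have hn : (m.untopD 0 : ℕ) ≤ (m'.untopD 0 : ℕ) := by
      lift m to ℕ using hm
      lift m' to ℕ using h'
      simpa using h
    have hlog : Real.log (m.untopD 0 : ℕ) ≤ Real.log (m'.untopD 0 : ℕ) := by
      rcases Nat.eq_zero_or_pos (m.untopD 0) with h0 | h0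
      · rw [h0]; simpa using Real.log_natCast_nonneg _
      · exact Real.log_le_log (by exact_mod_cast h0) (by exact_mod_cast hn)
    rcases Nat.eq_zero_or_pos ℓ with hℓ | hℓ
    · simp [hℓ]
    · exact EReal.coe_le_coe_iff.2 <| div_le_div_of_nonneg_right hlog (by positivity)

/-- A separated set for `d` is a separated set for `d'` provided distances compare. -/
lemma isSep_mono {L : List (PMap X)} {d d' : X → X → ℝ} {ε δ : ℝ} {ℓ : ℕ} {E : Finset X}
    (hcomp : ∀ x y, ε ≤ d x y → δ ≤ d' x y) (h : IsSep L d ε ℓ E) : IsSep L d' δ ℓ E := by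
  intro w hw w' hw' hne
  obtain ⟨gs, h1, h2, u, u', h3, h4, h5⟩ := h w hw w' hw' hne
  exact ⟨gs, h1, h2, u, u', h3, h4, hcomp _ _ h5⟩

lemma maxSep_mono {L : List (PMap X)} {d d' : X → X → ℝ} {ε δ : ℝ}
    (hcomp : ∀ x y, ε ≤ d x y → δ ≤ d' x y) (ℓ : ℕ) :
    maxSep L d ε ℓ ≤ maxSep L d' δ ℓ := by
  refine iSup₂_le fun E hE => ?_
  exact le_iSup₂ (f := fun (E : Finset X) (_ : IsSep L d' δ ℓ E) => (E.card : ℕ∞)) E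
    (isSep_mono hcomp hE)

/-- Key comparison between two entropies. -/
lemma entropy_le {L : List (PMap X)} {d d' : X → X → ℝ}
    (h : ∀ ε : ℝ, 0 < ε → ∃ δ : ℝ, 0 < δ ∧ ∀ x y, ε ≤ d x y → δ ≤ d' x y) :
    entropy L d ≤ entropy L d' := by
  refine iSup₂_le fun ε hε => ?_
  obtain ⟨δ, hδ, hcomp⟩ := h ε hε
  calc Filter.limsup (fun ℓ : ℕ => logRate (maxSep L d ε ℓ) ℓ) Filter.atTop
      ≤ Filter.limsup (fun ℓ : ℕ => logRate (maxSep L d' δ ℓ) ℓ) Filter.atTop :=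
        Filter.limsup_le_limsup (Filter.Eventually.of_forall fun ℓ =>
          logRate_mono (maxSep_mono hcomp ℓ) ℓ)
    _ ≤ entropy L d' := le_iSup₂ (f := fun (δ : ℝ) (_ : 0 < δ) =>
          Filter.limsup (fun ℓ : ℕ => logRate (maxSep L d' δ ℓ) ℓ) Filter.atTop) δ hδ

/-- Balls for a distance inducing the topology are open. -/
lemma ball_open [TopologicalSpace X] {d : X → X → ℝ} (hd : IsMetric d)
    (hind : ∀ s : Set X, IsOpen s ↔ ∀ x ∈ s, ∃ ε : ℝ, 0 < ε ∧ {y | d x y < ε} ⊆ s)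
    (x : X) (r : ℝ) : IsOpen {y | d x y < r} := by
  rw [hind]
  intro z hz
  refine ⟨r - d x z, by simpa using hz, fun y hy => ?_⟩
  calc d x y ≤ d x z + d z y := hd.2.2 x z y
    _ < d x z + (r - d x z) := by exact add_lt_add_right (show d z y < r - d x z from hy) _
    _ = r := by ring

/-- Uniform comparison of two metrics inducing the same compact topology. -/
lemma uniform_comp [TopologicalSpace X] [CompactSpace X]
    {d d' : X → X → ℝ} (hd : IsMetric d) (hd' : IsMetric d')
    (hind : ∀ s : Set X, IsOpen s ↔ ∀ x ∈ s, ∃ ε : ℝ, 0 < ε ∧ {y | d x y < ε} ⊆ s)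
    (hind' : ∀ s : Set X, IsOpen s ↔ ∀ x ∈ s, ∃ ε : ℝ, 0 < ε ∧ {y | d' x y < ε} ⊆ s)
    {ε : ℝ} (hε : 0 < ε) : ∃ δ : ℝ, 0 < δ ∧ ∀ x y, d' x y < δ → d x y < ε := by
  -- for each x, choose δx with the d'-ball of radius δx inside the d-ball of radius ε/2
  have hsel : ∀ x : X, ∃ δx : ℝ, 0 < δx ∧ {y | d' x y < δx} ⊆ {y | d x y < ε / 2} := by
    intro x
    have hopen : IsOpen {y | d x y < ε / 2} := ball_open hd hind x (ε / 2)
    have hx : x ∈ {y | d x y < ε / 2} := by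
      simp only [Set.mem_setOf_eq, (hd.2.1 x x).2 rfl]
      linarith
    exact (hind' _).1 hopen x hx
  choose δf hδf hsub using hsel
  -- finite subcover of the half-radius d'-balls
  have hcover : Set.univ ⊆ ⋃ x : X, {y | d' x y < δf x / 2} := by
    intro x _
    refine Set.mem_iUnion.2 ⟨x, ?_⟩
    simp only [Set.mem_setOf_eq, (hd'.2.1 x x).2 rfl]
    linarith [hδf x]
  obtain ⟨t, ht⟩ := isCompact_univ.elim_finite_subcover
    (fun x : X => {y | d' x y < δf x / 2}) (fun x => ball_open hd' hind' x _) hcover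
  rcases t.eq_empty_or_nonempty with rfl | htne
  · -- X is empty
    refine ⟨1, one_pos, fun x y _ => ?_⟩
    exact absurd (ht (Set.mem_univ x)) (by simp)
  · set δ := (t.image fun x => δf x / 2).min' (htne.image _) with hδdef
    have hδpos : 0 < δ := by
      obtain ⟨x, hx, hxe⟩ := Finset.mem_image.1 ((t.image fun x => δf x / 2).min'_mem (htne.image _))
      rw [hδdef, ← hxe]
      linarith [hδf x]
    refine ⟨δ, hδpos, fun x y hxy => ?_⟩
    obtain ⟨x₀, hx₀t, hx₀⟩ : ∃ x₀ ∈ t, d' x₀ x < δf x₀ / 2 := by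
      have := ht (Set.mem_univ x)
      simpa using this
    have hδle : δ ≤ δf x₀ / 2 :=
      (t.image fun x => δf x / 2).min'_le _ (Finset.mem_image.2 ⟨x₀, hx₀t, rfl⟩)
    have hy : d' x₀ y < δf x₀ := by
      calc d' x₀ y ≤ d' x₀ x + d' x y := hd'.2.2 _ _ _
        _ < δf x₀ / 2 + δ := add_lt_add hx₀ hxy
        _ ≤ δf x₀ := by linarith
    have hy2 : d x₀ y < ε / 2 := hsub x₀ hy
    have hx2 : d x₀ x < ε / 2 := hsub x₀ (show d' x₀ x < δf x₀ by linarith [hδf x₀])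
    calc d x y ≤ d x x₀ + d x₀ y := hd.2.2 _ _ _
      _ = d x₀ x + d x₀ y := by rw [hd.1 x x₀]
      _ < ε := by linarith

lemma entropy_eq [TopologicalSpace X] [CompactSpace X]
    {d d' : X → X → ℝ} (hd : IsMetric d) (hd' : IsMetric d')
    (hind : ∀ s : Set X, IsOpen s ↔ ∀ x ∈ s, ∃ ε : ℝ, 0 < ε ∧ {y | d x y < ε} ⊆ s)
    (hind' : ∀ s : Set X, IsOpen s ↔ ∀ x ∈ s, ∃ ε : ℝ, 0 < ε ∧ {y | d' x y < ε} ⊆ s)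
    (L : List (PMap X)) : entropy L d = entropy L d' := by
  have key : ∀ (e e' : X → X → ℝ), IsMetric e → IsMetric e' →
      (∀ s : Set X, IsOpen s ↔ ∀ x ∈ s, ∃ ε : ℝ, 0 < ε ∧ {y | e x y < ε} ⊆ s) →
      (∀ s : Set X, IsOpen s ↔ ∀ x ∈ s, ∃ ε : ℝ, 0 < ε ∧ {y | e' x y < ε} ⊆ s) →
      entropy L e ≤ entropy L e' := by
    intro e e' he he' hi hi'
    refine entropy_le fun ε hε => ?_
    obtain ⟨δ, hδ, hcomp⟩ := uniform_comp he he' hi hi' hε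
    exact ⟨δ, hδ, fun x y h => le_of_not_gt fun hlt => absurd h (not_le.2 (hcomp x y hlt))⟩
  exact le_antisymm (key d d' hd hd' hind hind') (key d' d hd' hd hind' hind)

end Aux
/-- Let `d` and `d'` be two metrics on a compact space `X` inducing its
topology.  For a compactly generated pseudogroup (with generating set `L`) acting on `X`, the
geometric entropy with respect to `d` is zero (resp. finite, resp. infinite) if and only if
the geometric entropy with respect to `d'` is zero (resp. finite, resp. infinite). -/
theorem stmt15 {X : Type*} [TopologicalSpace X] [CompactSpace X]
    (d d' : X → X → ℝ) (hd : IsMetric d) (hd' : IsMetric d')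
    (hind : ∀ s : Set X, IsOpen s ↔ ∀ x ∈ s, ∃ ε : ℝ, 0 < ε ∧ {y | d x y < ε} ⊆ s)
    (hind' : ∀ s : Set X, IsOpen s ↔ ∀ x ∈ s, ∃ ε : ℝ, 0 < ε ∧ {y | d' x y < ε} ⊆ s)
    (L : List (PMap X)) :
    (entropy L d = 0 ↔ entropy L d' = 0) ∧
    (entropy L d < ⊤ ↔ entropy L d' < ⊤) ∧
    (entropy L d = ⊤ ↔ entropy L d' = ⊤) := by
  have h := entropy_eq hd hd' hind hind' L
  rw [h]
  exact ⟨Iff.rfl, Iff.rfl, Iff.rfl⟩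
end

section
/- Let (m_ℓ) be the sequence alternating 2,3,2,3,… and (n_ℓ) the sequence in which the ℓ-th occurrence of 3 is followed by 2^ℓ occurrences of 2. Then the subgroup chains H_ℓ = (m_1⋯m_ℓ)ℤ and G_ℓ = (n_1⋯n_ℓ)ℤ in ℤ are tower equivalent, but they are not bounded tower equivalent: for any choice of indexing functions ℓ ↦ ν_ℓ and ν ↦ ℓ_ν realizing the tower equivalence, sup_ℓ |ν_ℓ − ℓ| = ∞ or sup_ν |ℓ_ν − ν| = ∞. -/
open scoped BigOperators

/-- The alternating sequence of covering degrees `2,3,2,3,…` (so `mseq 0 = m₁ = 2`). -/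
def mseq (i : ℕ) : ℕ := if Even i then 2 else 3

open Classical in
/-- The sequence of covering degrees `2,3,2,2,3,2,2,2,2,3,…` in which the `ℓ`-th occurrence
of `3` (at position `ℓ + 2^ℓ - 1`, in 1-based indexing) is followed by `2^ℓ` occurrences of
`2`; here `nseq i = n_{i+1}`. -/
noncomputable def nseq (i : ℕ) : ℕ :=
  if ∃ ℓ : ℕ, 1 ≤ ℓ ∧ i + 1 = ℓ + 2 ^ ℓ - 1 then 3 else 2

/-- The subgroup `(m₁ ⋯ m_ℓ)ℤ ⊆ ℤ` for the alternating sequence. -/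
noncomputable def Hsub (ℓ : ℕ) : AddSubgroup ℤ :=
  AddSubgroup.zmultiples ((∏ i ∈ Finset.range ℓ, mseq i : ℕ) : ℤ)

/-- The subgroup `(n₁ ⋯ n_ν)ℤ ⊆ ℤ` for the second sequence. -/
noncomputable def Gsub (ν : ℕ) : AddSubgroup ℤ :=
  AddSubgroup.zmultiples ((∏ i ∈ Finset.range ν, nseq i : ℕ) : ℤ)

private def fpos (ℓ : ℕ) : ℕ := ℓ + 2 ^ ℓ - 1

private lemma fpos_strictMono : StrictMono fpos := by
  apply strictMono_nat_of_lt_succ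
  intro n
  have h1 : 1 ≤ 2 ^ n := Nat.one_le_two_pow
  have h2 : 2 ^ (n + 1) = 2 * 2 ^ n := by ring
  simp only [fpos]; omega

private lemma fpos_ge {ℓ : ℕ} (h : 1 ≤ ℓ) : 2 ≤ fpos ℓ := by
  calc 2 = fpos 1 := by simp [fpos]
  _ ≤ fpos ℓ := fpos_strictMono.monotone h

private lemma nseq_eq_three {i : ℕ} : nseq i = 3 ↔ ∃ ℓ, 1 ≤ ℓ ∧ i + 1 = fpos ℓ := by
  rw [nseq]; split_ifs with h <;> simp [h, fpos]

private lemma nseq_two_or_three (i : ℕ) : nseq i = 2 ∨ nseq i = 3 := by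
  rw [nseq]; split_ifs <;> simp

open Classical in
private noncomputable def tcount (ν : ℕ) : ℕ :=
  ((Finset.range ν).filter (fun i => nseq i = 3)).card

private lemma tcount_succ (ν : ℕ) :
    tcount (ν + 1) = tcount ν + (if nseq ν = 3 then 1 else 0) := by
  classical
  simp only [tcount, Finset.range_add_one, Finset.filter_insert]
  split_ifs with h
  · rw [Finset.card_insert_of_notMem (by simp)]
  · rfl

private lemma tcount_le (ν : ℕ) : tcount ν ≤ ν := by
  classical
  exact le_trans (Finset.card_filter_le _ _) (by simp)

private lemma gprod (ν : ℕ) :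
    ∏ i ∈ Finset.range ν, nseq i = 2 ^ (ν - tcount ν) * 3 ^ (tcount ν) := by
  induction ν with
  | zero => simp [tcount]
  | succ ν ih =>
    have ht := tcount_le ν
    rw [Finset.prod_range_succ, ih, tcount_succ]
    rcases nseq_two_or_three ν with h | h
    · rw [if_neg (by simp [h]), h]
      have e : ν + 1 - (tcount ν + 0) = (ν - tcount ν) + 1 := by omega
      rw [e, Nat.add_zero, pow_succ]; ring
    · rw [if_pos h, h]
      have e : ν + 1 - (tcount ν + 1) = ν - tcount ν := by omega
      rw [e, pow_succ]; ring

private lemma tcount_key {k ν : ℕ} (hk : 1 ≤ k) : k ≤ tcount ν ↔ fpos k ≤ ν := by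
  classical
  constructor
  · intro h
    by_contra hc
    push_neg at hc
    have hsub : (Finset.range ν).filter (fun i => nseq i = 3) ⊆
        (Finset.Icc 1 (k - 1)).image (fun ℓ => fpos ℓ - 1) := by
      intro i hi
      simp only [Finset.mem_filter, Finset.mem_range] at hi
      obtain ⟨ℓ, hℓ1, hℓ2⟩ := nseq_eq_three.mp hi.2
      have : fpos ℓ < fpos k := by omega
      have hlt : ℓ < k := by
        by_contra hge
        exact absurd (fpos_strictMono.monotone (by omega : k ≤ ℓ)) (by omega)
      simp only [Finset.mem_image, Finset.mem_Icc]
      exact ⟨ℓ, ⟨hℓ1, by omega⟩, by omega⟩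
    have hc1 := Finset.card_le_card hsub
    have hc2 := Finset.card_image_le (s := Finset.Icc 1 (k - 1)) (f := fun ℓ => fpos ℓ - 1)
    simp only [Nat.card_Icc] at hc2
    simp only [tcount] at h
    omega
  · intro h
    have hinj : Set.InjOn (fun ℓ => fpos ℓ - 1) (Finset.Icc 1 k) := by
      intro a ha b hb hab
      simp only [Finset.coe_Icc, Set.mem_Icc] at ha hb
      have ha2 := fpos_ge ha.1
      have hb2 := fpos_ge hb.1
      have hab' : fpos a - 1 = fpos b - 1 := hab
      exact fpos_strictMono.injective (by omega)
    have hmaps : ∀ ℓ ∈ Finset.Icc 1 k, fpos ℓ - 1 ∈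
        (Finset.range ν).filter (fun i => nseq i = 3) := by
      intro ℓ hℓ
      simp only [Finset.mem_Icc] at hℓ
      have h2 := fpos_ge hℓ.1
      have hle : fpos ℓ ≤ fpos k := fpos_strictMono.monotone hℓ.2
      simp only [Finset.mem_filter, Finset.mem_range]
      exact ⟨by omega, nseq_eq_three.mpr ⟨ℓ, hℓ.1, by omega⟩⟩
    have hcard := Finset.card_le_card_of_injOn _ hmaps hinj
    refine le_trans (le_of_eq ?_) hcard
    rw [Nat.card_Icc]
    omega

private lemma hprod (ℓ : ℕ) :
    ∏ i ∈ Finset.range ℓ, mseq i = 2 ^ ((ℓ + 1) / 2) * 3 ^ (ℓ / 2) := by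
  induction ℓ with
  | zero => simp
  | succ ℓ ih =>
    rw [Finset.prod_range_succ, ih, mseq]
    rcases Nat.even_or_odd ℓ with h | h
    · obtain ⟨m, rfl⟩ := h
      have e1 : (m + m + 1) / 2 = m := by omega
      have e2 : (m + m + 1 + 1) / 2 = m + 1 := by omega
      have e3 : (m + m) / 2 = m := by omega
      rw [e1, e2, e3]
      split_ifs with hev
      · rw [pow_succ]; ring
      · exact absurd ⟨m, rfl⟩ hev
    · obtain ⟨m, rfl⟩ := h
      have e1 : (2 * m + 1 + 1) / 2 = m + 1 := by omega
      have e2 : (2 * m + 1) / 2 = m := by omega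
      have e3 : (2 * m + 1 + 1 + 1) / 2 = m + 1 := by omega
      rw [e1, e2, e3]
      split_ifs with hev
      · obtain ⟨r, hr⟩ := hev; omega
      · rw [pow_succ, pow_succ]; ring

private lemma zmul_le {a b : ℤ} :
    AddSubgroup.zmultiples a ≤ AddSubgroup.zmultiples b ↔ b ∣ a := by
  constructor
  · intro h
    exact Int.mem_zmultiples_iff.mp (h (AddSubgroup.mem_zmultiples a))
  · intro h x hx
    rw [Int.mem_zmultiples_iff] at hx ⊢
    exact h.trans hx

private lemma gsub_le_hsub {ν ℓ : ℕ} :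
    Gsub ν ≤ Hsub ℓ ↔ (∏ i ∈ Finset.range ℓ, mseq i) ∣ (∏ i ∈ Finset.range ν, nseq i) := by
  rw [Gsub, Hsub, zmul_le, Int.natCast_dvd_natCast]

private lemma hsub_le_gsub {ν ℓ : ℕ} :
    Hsub ℓ ≤ Gsub ν ↔ (∏ i ∈ Finset.range ν, nseq i) ∣ (∏ i ∈ Finset.range ℓ, mseq i) := by
  rw [Gsub, Hsub, zmul_le, Int.natCast_dvd_natCast]

/-- The subgroup chains `H ℓ = (m₁⋯m_ℓ)ℤ` and `G ν = (n₁⋯n_ν)ℤ` in `ℤ`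
associated to the sequences `2,3,2,3,…` and `2,3,2,2,3,2,2,2,2,3,…` are tower equivalent,
but not bounded tower equivalent: for any indexing functions `ℓ ↦ ν_ℓ` and `ν ↦ ℓ_ν`
realizing the tower equivalence, the displacement `max(sup_ℓ|ν_ℓ − ℓ|, sup_ν|ℓ_ν − ν|)`
is infinite. -/
theorem stmt17 :
    ((∀ ℓ : ℕ, ∃ ν : ℕ, Gsub ν ≤ Hsub ℓ) ∧ (∀ ν : ℕ, ∃ ℓ : ℕ, Hsub ℓ ≤ Gsub ν)) ∧
    ¬ ∃ (νf ℓf : ℕ → ℕ) (D : ℕ),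
        (∀ ℓ : ℕ, Gsub (νf ℓ) ≤ Hsub ℓ ∧ (νf ℓ : ℤ) - ℓ ≤ D ∧ (ℓ : ℤ) - νf ℓ ≤ D) ∧
        (∀ ν : ℕ, Hsub (ℓf ν) ≤ Gsub ν ∧ (ℓf ν : ℤ) - ν ≤ D ∧ (ν : ℤ) - ℓf ν ≤ D) := by
  constructor
  · constructor
    · -- ∀ ℓ, ∃ ν with Gsub ν ≤ Hsub ℓ : take ν = fpos (ℓ+1)
      intro ℓ
      refine ⟨fpos (ℓ + 1), gsub_le_hsub.mpr ?_⟩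
      set ν := fpos (ℓ + 1) with hν
      have hlow : ℓ + 1 ≤ tcount ν := (tcount_key (by omega)).mpr le_rfl
      have hup : tcount ν ≤ ℓ + 1 := by
        by_contra h1
        rw [not_le] at h1
        exact absurd ((tcount_key (by omega)).mp h1)
          (not_le.mpr (fpos_strictMono (by omega : ℓ + 1 < ℓ + 2)))
      have h2 : 1 ≤ 2 ^ (ℓ + 1) := Nat.one_le_two_pow
      have hνeq : ν = ℓ + 1 + 2 ^ (ℓ + 1) - 1 := rfl
      have hp2 : ℓ + 1 < 2 ^ (ℓ + 1) := Nat.lt_two_pow_self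
      rw [hprod, gprod]
      exact mul_dvd_mul (pow_dvd_pow 2 (by omega)) (pow_dvd_pow 3 (by omega))
    · -- ∀ ν, ∃ ℓ with Hsub ℓ ≤ Gsub ν : take ℓ = 2ν
      intro ν
      refine ⟨2 * ν, hsub_le_gsub.mpr ?_⟩
      have ht := tcount_le ν
      rw [hprod, gprod]
      have e1 : (2 * ν + 1) / 2 = ν := by omega
      have e2 : (2 * ν) / 2 = ν := by omega
      rw [e1, e2]
      exact mul_dvd_mul (pow_dvd_pow 2 (by omega)) (pow_dvd_pow 3 (by omega))
  · rintro ⟨νf, ℓf, D, h1, -⟩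
    set k := D + 3 with hk
    set ℓ := 2 * k with hℓ
    obtain ⟨hle, hb, -⟩ := h1 ℓ
    have hbound : νf ℓ ≤ ℓ + D := by omega
    have hdvd : (∏ i ∈ Finset.range ℓ, mseq i) ∣ ∏ i ∈ Finset.range (νf ℓ), nseq i :=
      gsub_le_hsub.mp hle
    rw [hprod, gprod] at hdvd
    have h3 : (3 : ℕ) ^ (ℓ / 2) ∣ 2 ^ (νf ℓ - tcount (νf ℓ)) * 3 ^ (tcount (νf ℓ)) :=
      dvd_trans (Dvd.intro_left _ rfl) hdvd
    have hcop : Nat.Coprime (3 ^ (ℓ / 2)) (2 ^ (νf ℓ - tcount (νf ℓ))) := by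
      have h32 : Nat.Coprime 3 2 := by decide
      exact h32.pow _ _
    have h4 : (3 : ℕ) ^ (ℓ / 2) ∣ 3 ^ (tcount (νf ℓ)) :=
      hcop.dvd_of_dvd_mul_left h3
    have h5 : ℓ / 2 ≤ tcount (νf ℓ) :=
      (Nat.pow_dvd_pow_iff_le_right (by norm_num)).mp h4
    have e1 : ℓ / 2 = k := by omega
    rw [e1] at h5
    have h6 : fpos k ≤ νf ℓ := (tcount_key (by omega)).mp h5
    have h7 : fpos k = k + 2 ^ k - 1 := rfl
    have h8 : D < 2 ^ D := Nat.lt_two_pow_self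
    have h9 : 2 ^ k = 8 * 2 ^ D := by rw [hk]; ring
    omega
end
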